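/- (Theorem 1, deterministic LHV bound.) Let G = (V, E) be a finite simple graph with independence number α(G) < |V| and xi number Ξ(G). Then for all functions a, b : V → {0, 1}, Σ_{i ∈ V} a(i)·b(i) − (1/(2·Ξ(G))) · Σ_{{i,j} ∈ E} (a(i)·b(j) + a(j)·b(i)) ≤ α(G). -/

import Mathlib

open scoped Classical

/-- The independence number of a finite simple graph: the largest cardinality of a
set of pairwise nonadjacent vertices. -/
noncomputable def indepNum {V : Type*} [Fintype V] (G : SimpleGraph V) : ℕ :=
  sSup {n | ∃ s : Finset V, (∀ u ∈ s, ∀ v ∈ s, u ≠ v → ¬ G.Adj u v) ∧ s.card = n}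

/-- `xiOf G S = max_{v ∈ S} |{u ∈ S : u adjacent to v}|`. -/
noncomputable def xiOf {V : Type*} [Fintype V] (G : SimpleGraph V) (S : Finset V) : ℕ :=
  S.sup fun v => (S.filter fun u => G.Adj u v).card

/-- The xi number of a graph: the minimum of `xiOf G S` over all vertex subsets `S`
with `|S| = α(G) + 1`. -/
noncomputable def xiNum {V : Type*} [Fintype V] (G : SimpleGraph V) : ℕ :=
  sInf {k | ∃ S : Finset V, S.card = indepNum G + 1 ∧ xiOf G S = k}

section Aux

variable {V : Type*} [Fintype V] (G : SimpleGraph V)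

lemma indep_card_le (s : Finset V) (hs : ∀ u ∈ s, ∀ v ∈ s, u ≠ v → ¬ G.Adj u v) :
    s.card ≤ indepNum G := by
  apply le_csSup
  · exact ⟨Fintype.card V, by rintro n ⟨t, -, ht⟩; exact ht ▸ t.card_le_univ⟩
  · exact ⟨s, hs, rfl⟩

lemma exists_adj_of_card (S : Finset V) (hS : indepNum G < S.card) :
    ∃ u ∈ S, ∃ v ∈ S, G.Adj u v := by
  by_contra h
  push_neg at h
  have := indep_card_le G S (fun u hu v hv _ => h u hu v hv)
  omega

lemma one_le_xiNum (hα : indepNum G < Fintype.card V) : 1 ≤ xiNum G := by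
  apply le_csInf
  · obtain ⟨S, -, hcard⟩ := Finset.exists_subset_card_eq (s := (Finset.univ : Finset V))
      (n := indepNum G + 1) (by simpa using hα)
    exact ⟨xiOf G S, S, hcard, rfl⟩
  · rintro k ⟨S, hcard, rfl⟩
    obtain ⟨u, hu, v, hv, huv⟩ := exists_adj_of_card G S (by omega)
    calc 1 ≤ (S.filter fun w => G.Adj w v).card :=
          Finset.card_pos.mpr ⟨u, Finset.mem_filter.mpr ⟨hu, huv⟩⟩
      _ ≤ xiOf G S :=
          Finset.le_sup (f := fun v => (S.filter fun u => G.Adj u v).card) hv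

/-- Number of edges with both endpoints inside `T`. -/
noncomputable def eIn (T : Finset V) : ℕ :=
  (G.edgeFinset.filter fun e => ∀ x ∈ e, x ∈ T).card

lemma key_count : ∀ n (T : Finset V), T.card ≤ n →
    xiNum G * (T.card - indepNum G) ≤ eIn G T := by
  intro n
  induction n with
  | zero =>
    intro T hT
    have : T.card = 0 := Nat.le_zero.mp hT
    simp [this]
  | succ n ih =>
    intro T hT
    by_cases hc : T.card ≤ indepNum G
    · simp [Nat.sub_eq_zero_of_le hc]
    push_neg at hc
    obtain ⟨S, hSsub, hScard⟩ := Finset.exists_subset_card_eq (s := T) (n := indepNum G + 1) hc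
    have hxi : xiNum G ≤ xiOf G S := csInf_le (OrderBot.bddBelow _) ⟨S, hScard, rfl⟩
    have hSne : S.Nonempty := Finset.card_pos.mp (by omega)
    obtain ⟨v, hvS, hv⟩ := Finset.exists_mem_eq_sup S hSne
      (fun v => (S.filter fun u => G.Adj u v).card)
    have hvT : v ∈ T := hSsub hvS
    have hdeg : xiNum G ≤ (T.filter fun u => G.Adj u v).card := by
      refine hxi.trans ?_
      rw [xiOf, hv]
      exact Finset.card_le_card (Finset.filter_subset_filter _ hSsub)
    -- split the edges inside T according to whether they contain v
    set A := (G.edgeFinset.filter fun e => ∀ x ∈ e, x ∈ T)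
    have hsplit : (A.filter fun e => v ∈ e).card + (A.filter fun e => ¬ v ∈ e).card
        = eIn G T := Finset.card_filter_add_card_filter_not _
    -- the part not containing v is the edges inside T.erase v
    have hB : (A.filter fun e => ¬ v ∈ e) =
        (G.edgeFinset.filter fun e => ∀ x ∈ e, x ∈ T.erase v) := by
      ext e
      simp only [A, Finset.mem_filter, and_assoc, Finset.mem_erase]
      constructor
      · rintro ⟨he, hT', hv'⟩
        exact ⟨he, fun x hx => ⟨fun h => hv' (h ▸ hx), hT' x hx⟩⟩
      · rintro ⟨he, h⟩
        exact ⟨he, fun x hx => (h x hx).2, fun hv' => (h v hv').1 rfl⟩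
    -- the part containing v has at least deg_T v elements
    have hA : (T.filter fun u => G.Adj u v).card ≤ (A.filter fun e => v ∈ e).card := by
      apply Finset.card_le_card_of_injOn (fun u => s(u, v))
      · intro u hu
        rw [Finset.mem_coe, Finset.mem_filter] at hu
        simp only [A, Finset.mem_coe, Finset.mem_filter, SimpleGraph.mem_edgeFinset,
          SimpleGraph.mem_edgeSet]
        refine ⟨⟨hu.2, ?_⟩, ?_⟩
        · intro x hx
          rcases Sym2.mem_iff.mp hx with h | h
          · exact h ▸ hu.1
          · exact h ▸ hvT
        · exact Sym2.mem_mk_right u v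
      · intro u hu u' hu' heq
        exact Sym2.congr_left.mp heq
    have hvne : v ∉ T.erase v := Finset.notMem_erase v T
    have hcard' : (T.erase v).card = T.card - 1 := Finset.card_erase_of_mem hvT
    have hih : xiNum G * ((T.erase v).card - indepNum G) ≤ eIn G (T.erase v) :=
      ih (T.erase v) (by omega)
    have heq2 : T.card - indepNum G = ((T.erase v).card - indepNum G) + 1 := by omega
    calc xiNum G * (T.card - indepNum G)
        = xiNum G * ((T.erase v).card - indepNum G) + xiNum G := by
          rw [heq2, Nat.mul_add, Nat.mul_one]
      _ ≤ eIn G (T.erase v) + (A.filter fun e => v ∈ e).card :=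
          Nat.add_le_add hih (hdeg.trans hA)
      _ = (A.filter fun e => ¬ v ∈ e).card + (A.filter fun e => v ∈ e).card := by
          rw [hB, eIn]
      _ = eIn G T := by omega

end Aux

/-- Theorem 1, deterministic LHV bound: for all `{0,1}`-valued
assignments `a b : V → ℝ`,
`Σ_{i ∈ V} a i * b i − (1/(2·Ξ(G))) · Σ_{{i,j} ∈ E} (a i * b j + a j * b i) ≤ α(G)`. -/
theorem stmt_1 {V : Type*} [Fintype V] (G : SimpleGraph V)
    (hα : indepNum G < Fintype.card V)
    (a b : V → ℝ) (ha : ∀ i, a i = 0 ∨ a i = 1) (hb : ∀ i, b i = 0 ∨ b i = 1) :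
    ∑ i, a i * b i -
      (1 / (2 * (xiNum G : ℝ))) *
        ∑ e ∈ G.edgeFinset,
          Sym2.lift ⟨fun i j => a i * b j + a j * b i, fun i j => by ring⟩ e
      ≤ indepNum G := by
  set f : Sym2 V → ℝ :=
    Sym2.lift ⟨fun i j => a i * b j + a j * b i, fun i j => by ring⟩ with hf
  have ha0 : ∀ i, 0 ≤ a i := fun i => by rcases ha i with h | h <;> simp [h]
  have hb0 : ∀ i, 0 ≤ b i := fun i => by rcases hb i with h | h <;> simp [h]
  set T : Finset V := Finset.univ.filter fun i => a i = 1 ∧ b i = 1 with hT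
  -- the diagonal sum equals the cardinality of T
  have hsum1 : ∑ i, a i * b i = (T.card : ℝ) := by
    have : ∀ i, a i * b i = if a i = 1 ∧ b i = 1 then (1 : ℝ) else 0 := by
      intro i
      rcases ha i with h | h <;> rcases hb i with h' | h' <;> simp [h, h']
    rw [Finset.sum_congr rfl fun i _ => this i, Finset.sum_boole, hT]
  -- every edge term is nonnegative
  have hf0 : ∀ e : Sym2 V, 0 ≤ f e := by
    intro e
    induction e using Sym2.ind with
    | _ i j =>
      rw [hf, Sym2.lift_mk]
      have := mul_nonneg (ha0 i) (hb0 j)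
      have := mul_nonneg (ha0 j) (hb0 i)
      dsimp only
      linarith
  -- every edge inside T contributes exactly 2
  have hf2 : ∀ e ∈ G.edgeFinset.filter fun e => ∀ x ∈ e, x ∈ T, (2 : ℝ) ≤ f e := by
    intro e he
    rw [Finset.mem_filter] at he
    induction e using Sym2.ind with
    | _ i j =>
      have hi : i ∈ T := he.2 i (Sym2.mem_mk_left i j)
      have hj : j ∈ T := he.2 j (Sym2.mem_mk_right i j)
      rw [hT, Finset.mem_filter] at hi hj
      rw [hf, Sym2.lift_mk]
      dsimp only
      rw [hi.2.1, hi.2.2, hj.2.1, hj.2.2]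
      norm_num
  -- lower bound on the edge sum
  have hEdge : 2 * (eIn G T : ℝ) ≤ ∑ e ∈ G.edgeFinset, f e := by
    have h1 : ∑ e ∈ G.edgeFinset.filter (fun e => ∀ x ∈ e, x ∈ T), f e
        ≤ ∑ e ∈ G.edgeFinset, f e := by
      apply Finset.sum_le_sum_of_subset_of_nonneg (Finset.filter_subset _ _)
      intro e _ _
      exact hf0 e
    have h2 : 2 * (eIn G T : ℝ)
        ≤ ∑ e ∈ G.edgeFinset.filter (fun e => ∀ x ∈ e, x ∈ T), f e := by
      rw [eIn]
      calc (2 : ℝ) * ((G.edgeFinset.filter fun e => ∀ x ∈ e, x ∈ T).card : ℝ)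
          = ∑ _e ∈ G.edgeFinset.filter (fun e => ∀ x ∈ e, x ∈ T), (2 : ℝ) := by
            rw [Finset.sum_const, nsmul_eq_mul]; ring
        _ ≤ _ := Finset.sum_le_sum hf2
    linarith
  have hΞ1 : 1 ≤ xiNum G := one_le_xiNum G hα
  have hΞR : (1 : ℝ) ≤ (xiNum G : ℝ) := by exact_mod_cast hΞ1
  have hΞpos : (0 : ℝ) < (xiNum G : ℝ) := by linarith
  have hcoef : (0 : ℝ) < 1 / (2 * (xiNum G : ℝ)) := by positivity
  have hFnonneg : 0 ≤ ∑ e ∈ G.edgeFinset, f e :=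
    Finset.sum_nonneg fun e _ => hf0 e
  rw [hsum1]
  by_cases hc : T.card ≤ indepNum G
  · have : (T.card : ℝ) ≤ (indepNum G : ℝ) := by exact_mod_cast hc
    nlinarith
  · push_neg at hc
    have hkey : xiNum G * (T.card - indepNum G) ≤ eIn G T :=
      key_count G T.card T le_rfl
    have hkeyR : (xiNum G : ℝ) * ((T.card : ℝ) - (indepNum G : ℝ)) ≤ (eIn G T : ℝ) := by
      have := (Nat.cast_le (α := ℝ)).mpr hkey
      push_cast [Nat.cast_sub hc.le] at this
      linarith
    have h1 : 2 * ((xiNum G : ℝ) * ((T.card : ℝ) - (indepNum G : ℝ)))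
        ≤ ∑ e ∈ G.edgeFinset, f e := by linarith
    have h2 : (1 / (2 * (xiNum G : ℝ))) *
        (2 * ((xiNum G : ℝ) * ((T.card : ℝ) - (indepNum G : ℝ))))
        = (T.card : ℝ) - (indepNum G : ℝ) := by
      field_simp
    have h3 : (1 / (2 * (xiNum G : ℝ))) *
        (2 * ((xiNum G : ℝ) * ((T.card : ℝ) - (indepNum G : ℝ))))
        ≤ (1 / (2 * (xiNum G : ℝ))) * ∑ e ∈ G.edgeFinset, f e :=
      mul_le_mul_of_nonneg_left h1 hcoef.le
    linarith
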